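/- (Hölder–L² interpolation bound for the sup norm, core of Corollary 1.8) Let d ≥ 1 be an integer, θ ∈ (0,1], and L > 0. Let g : ℝᵈ → ℝ be a continuous function satisfying |g(x) − g(y)| ≤ L·‖x − y‖^θ for all x, y ∈ ℝᵈ. Then for every point y ∈ ℝᵈ, ω_d · (|g(y)|/2)² · (|g(y)|/(2L))^{d/θ} ≤ ∫_{ℝᵈ} g(x)² dx, where ω_d denotes the Lebesgue volume of the unit ball in ℝᵈ. In particular, if g ∈ L²(ℝᵈ), then ‖g‖_∞^{(2θ+d)/θ} ≤ 2^{(2θ+d)/θ} · ω_d⁻¹ · L^{d/θ} · ‖g‖²_{L²}. -/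

import Mathlib

open MeasureTheory

/-- Hölder–L² interpolation bound for the sup norm (core of Corollary 1.8):
if `g` is continuous with `|g x - g y| ≤ L ‖x - y‖^θ`, then for every `y`,
`ω_d (|g y|/2)² (|g y|/(2L))^{d/θ} ≤ ∫ g²` (as an inequality of extended reals,
trivially true when the integral is infinite), and in particular if `g ∈ L²` then
`‖g‖_∞^{(2θ+d)/θ} ≤ 2^{(2θ+d)/θ} ω_d⁻¹ L^{d/θ} ‖g‖²_{L²}`, where `ω_d` is the
Lebesgue volume of the unit ball in `ℝᵈ`. -/
theorem holder_L2_interpolation (d : ℕ) (hd : 1 ≤ d) (θ L : ℝ)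
    (hθ : θ ∈ Set.Ioc (0 : ℝ) 1) (hL : 0 < L)
    (g : EuclideanSpace ℝ (Fin d) → ℝ) (hg : Continuous g)
    (hHolder : ∀ x y : EuclideanSpace ℝ (Fin d), |g x - g y| ≤ L * ‖x - y‖ ^ θ) :
    (∀ y : EuclideanSpace ℝ (Fin d),
      ENNReal.ofReal
          ((volume (Metric.ball (0 : EuclideanSpace ℝ (Fin d)) 1)).toReal *
            (|g y| / 2) ^ 2 * (|g y| / (2 * L)) ^ ((d : ℝ) / θ))
        ≤ ∫⁻ x, ENNReal.ofReal ((g x) ^ 2) ∂volume) ∧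
    (MemLp g 2 volume →
      (eLpNorm g ⊤ volume).toReal ^ ((2 * θ + d) / θ)
        ≤ 2 ^ ((2 * θ + d) / θ) *
            ((volume (Metric.ball (0 : EuclideanSpace ℝ (Fin d)) 1)).toReal)⁻¹ *
            L ^ ((d : ℝ) / θ) * ∫ x, (g x) ^ 2 ∂volume) := by
  obtain ⟨hθ0, hθ1⟩ := hθ
  set V : ENNReal := volume (Metric.ball (0 : EuclideanSpace ℝ (Fin d)) 1) with hV
  have hVlt : V < ⊤ := measure_ball_lt_top
  have hVpos : 0 < V := Metric.measure_ball_pos _ _ one_pos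
  have hVR : 0 < V.toReal := ENNReal.toReal_pos hVpos.ne' hVlt.ne
  have key : ∀ y : EuclideanSpace ℝ (Fin d),
      ENNReal.ofReal (V.toReal * (|g y| / 2) ^ 2 * (|g y| / (2 * L)) ^ ((d : ℝ) / θ))
        ≤ ∫⁻ x, ENNReal.ofReal ((g x) ^ 2) ∂volume := by
    intro y
    rcases eq_or_lt_of_le (abs_nonneg (g y)) with h0 | hμ
    · simp [← h0]
    set μ := |g y| with hμdef
    set r : ℝ := (μ / (2 * L)) ^ (1 / θ : ℝ) with hr
    have hbase : 0 < μ / (2 * L) := div_pos hμ (by linarith)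
    have hrpos : 0 < r := Real.rpow_pos_of_pos hbase _
    have hrθ : r ^ θ = μ / (2 * L) := by
      rw [hr, ← Real.rpow_mul hbase.le, one_div_mul_cancel hθ0.ne', Real.rpow_one]
    have hball : ∀ x ∈ Metric.ball y r, (μ / 2) ^ 2 ≤ (g x) ^ 2 := by
      intro x hx
      have hxr : ‖x - y‖ < r := by
        rw [← dist_eq_norm]; exact Metric.mem_ball.mp hx
      have h1 : ‖x - y‖ ^ θ ≤ r ^ θ :=
        Real.rpow_le_rpow (norm_nonneg _) hxr.le hθ0.le
      have h2 : |g x - g y| ≤ μ / 2 := by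
        calc |g x - g y| ≤ L * ‖x - y‖ ^ θ := hHolder x y
          _ ≤ L * r ^ θ := by nlinarith
          _ = μ / 2 := by rw [hrθ]; field_simp
      have h3 : μ / 2 ≤ |g x| := by
        have := abs_sub_abs_le_abs_sub (g y) (g x)
        rw [abs_sub_comm] at this
        linarith [this.trans h2]
      calc (μ / 2) ^ 2 ≤ |g x| ^ 2 := by nlinarith [abs_nonneg (g x)]
        _ = (g x) ^ 2 := sq_abs _
    haveI : Nontrivial (EuclideanSpace ℝ (Fin d)) := by
      apply Module.nontrivial_of_finrank_pos (R := ℝ)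
      rw [finrank_euclideanSpace_fin]
      omega
    have hvol : volume (Metric.ball y r)
        = ENNReal.ofReal ((μ / (2 * L)) ^ ((d : ℝ) / θ)) * V := by
      rw [Measure.addHaar_ball volume y hrpos.le, finrank_euclideanSpace_fin]
      congr 2
      rw [hr, ← Real.rpow_natCast _ d, ← Real.rpow_mul hbase.le]
      congr 1
      field_simp
    calc ENNReal.ofReal (V.toReal * (μ / 2) ^ 2 * (μ / (2 * L)) ^ ((d : ℝ) / θ))
        = ENNReal.ofReal ((μ / 2) ^ 2) * (ENNReal.ofReal ((μ / (2 * L)) ^ ((d : ℝ) / θ)) * V) := by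
          rw [ENNReal.ofReal_mul (by positivity), ENNReal.ofReal_mul hVR.le,
            ENNReal.ofReal_toReal hVlt.ne]
          ring
      _ = ∫⁻ _ in Metric.ball y r, ENNReal.ofReal ((μ / 2) ^ 2) ∂volume := by
          rw [setLIntegral_const, hvol]
      _ ≤ ∫⁻ x in Metric.ball y r, ENNReal.ofReal ((g x) ^ 2) ∂volume := by
          refine setLIntegral_mono (by fun_prop) ?_
          intro x hx
          exact ENNReal.ofReal_le_ofReal (hball x hx)
      _ ≤ ∫⁻ x, ENNReal.ofReal ((g x) ^ 2) ∂volume := setLIntegral_le_lintegral _ _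
  refine ⟨key, fun hmem => ?_⟩
  set p : ℝ := (2 * θ + (d : ℝ)) / θ with hp
  have hppos : 0 < p := by
    apply div_pos _ hθ0
    have : (1 : ℝ) ≤ (d : ℝ) := by exact_mod_cast hd
    linarith
  set I : ℝ := ∫ x, (g x) ^ 2 ∂volume with hI
  have hInn : 0 ≤ I := integral_nonneg fun x => sq_nonneg _
  have hIeq : ENNReal.ofReal I = ∫⁻ x, ENNReal.ofReal ((g x) ^ 2) ∂volume :=
    ofReal_integral_eq_lintegral_ofReal hmem.integrable_sq
      (Filter.Eventually.of_forall fun x => sq_nonneg _)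
  set B : ℝ := 2 ^ p * (V.toReal)⁻¹ * L ^ ((d : ℝ) / θ) * I with hB
  have hBnn : 0 ≤ B := by positivity
  -- pointwise bound |g y| ^ p ≤ B
  have hptwise : ∀ y : EuclideanSpace ℝ (Fin d), |g y| ^ p ≤ B := by
    intro y
    rcases eq_or_lt_of_le (abs_nonneg (g y)) with h0 | hμ
    · rw [← h0, Real.zero_rpow hppos.ne']; exact hBnn
    set μ := |g y| with hμdef
    have hreal : V.toReal * (μ / 2) ^ 2 * (μ / (2 * L)) ^ ((d : ℝ) / θ) ≤ I := by
      have := key y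
      rw [← hIeq] at this
      exact (ENNReal.ofReal_le_ofReal_iff hInn).mp this
    have h2L : (0 : ℝ) < 2 * L := by linarith
    have hsplit : (μ / (2 * L)) ^ ((d : ℝ) / θ)
        = μ ^ ((d : ℝ) / θ) / (2 ^ ((d : ℝ) / θ) * L ^ ((d : ℝ) / θ)) := by
      rw [Real.div_rpow hμ.le h2L.le, Real.mul_rpow (by norm_num) hL.le]
    have hμp : μ ^ p = μ ^ (2 : ℝ) * μ ^ ((d : ℝ) / θ) := by
      rw [← Real.rpow_add hμ]
      congr 1
      field_simp [hp]
      rw [hp, div_mul_cancel₀ _ hθ0.ne']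
    have h2p : (2 : ℝ) ^ p = 2 ^ (2 : ℝ) * 2 ^ ((d : ℝ) / θ) := by
      rw [← Real.rpow_add (by norm_num)]
      congr 1
      field_simp [hp]
      rw [hp, div_mul_cancel₀ _ hθ0.ne']
    have hμ2 : μ ^ (2 : ℝ) = μ ^ (2 : ℕ) := by
      rw [show (2:ℝ) = ((2:ℕ):ℝ) by norm_num, Real.rpow_natCast]
    have h22 : (2 : ℝ) ^ (2 : ℝ) = 4 := by
      rw [show (2:ℝ) = ((2:ℕ):ℝ) by norm_num, Real.rpow_natCast]; norm_num
    have hLd : (0 : ℝ) < L ^ ((d : ℝ) / θ) := Real.rpow_pos_of_pos hL _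
    have h2d : (0 : ℝ) < 2 ^ ((d : ℝ) / θ) := Real.rpow_pos_of_pos (by norm_num) _
    have hLHS : V.toReal * (μ / 2) ^ 2 * (μ / (2 * L)) ^ ((d : ℝ) / θ)
        = V.toReal * μ ^ p / (2 ^ p * L ^ ((d : ℝ) / θ)) := by
      rw [hsplit, hμp, h2p, hμ2, h22, div_pow]
      field_simp
      ring
    rw [hLHS] at hreal
    have hfinal : μ ^ p = (V.toReal * μ ^ p / (2 ^ p * L ^ ((d : ℝ) / θ)))
        * (2 ^ p * L ^ ((d : ℝ) / θ) / V.toReal) := by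
      have h2pp : (0 : ℝ) < 2 ^ p := Real.rpow_pos_of_pos (by norm_num) _
      field_simp
    rw [hfinal, hB]
    calc (V.toReal * μ ^ p / (2 ^ p * L ^ ((d : ℝ) / θ)))
          * (2 ^ p * L ^ ((d : ℝ) / θ) / V.toReal)
        ≤ I * (2 ^ p * L ^ ((d : ℝ) / θ) / V.toReal) := by
          apply mul_le_mul_of_nonneg_right hreal
          positivity
      _ = 2 ^ p * (V.toReal)⁻¹ * L ^ ((d : ℝ) / θ) * I := by
          field_simp
  set C : ℝ := B ^ (1 / p : ℝ) with hC
  have hCnn : 0 ≤ C := Real.rpow_nonneg hBnn _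
  have hgC : ∀ y : EuclideanSpace ℝ (Fin d), |g y| ≤ C := by
    intro y
    have h1 : |g y| ^ p ≤ C ^ p := by
      rw [hC, ← Real.rpow_mul hBnn, one_div_mul_cancel hppos.ne', Real.rpow_one]
      exact hptwise y
    by_contra hcon
    push_neg at hcon
    have := Real.rpow_lt_rpow hCnn hcon hppos
    linarith
  have hM : (eLpNorm g ⊤ volume).toReal ≤ C := by
    have h1 : eLpNorm g ⊤ volume ≤ ENNReal.ofReal C := by
      rw [eLpNorm_exponent_top]
      exact eLpNormEssSup_le_of_ae_bound (Filter.Eventually.of_forall fun y => by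
        simpa using hgC y)
    calc (eLpNorm g ⊤ volume).toReal ≤ (ENNReal.ofReal C).toReal :=
        ENNReal.toReal_mono ENNReal.ofReal_ne_top h1
      _ = C := ENNReal.toReal_ofReal hCnn
  calc (eLpNorm g ⊤ volume).toReal ^ p
      ≤ C ^ p := Real.rpow_le_rpow ENNReal.toReal_nonneg hM hppos.le
    _ = B := by
        rw [hC, ← Real.rpow_mul hBnn, one_div_mul_cancel hppos.ne', Real.rpow_one]
    _ = 2 ^ p * (V.toReal)⁻¹ * L ^ ((d : ℝ) / θ) * I := hB
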